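/- Let d ≥ 1 be a natural number, let U ⊆ ℂ be a nonempty, bounded, open, simply connected set, and let W ⊆ ℂ be an open set containing the closure of U. Let g : Fin d → (ℂ → ℂ) be such that each g_i is holomorphic on W, g_i maps the closure of U into U, and the sets g_i(closure U) for distinct i are pairwise disjoint. Let f : ℂ → ℂ be a function satisfying f(g_i(z)) = z for every i and every z in the closure of U. Let X = {z ∈ ℂ : for every n ≥ 0, f^[n](z) ∈ ⋃_i g_i(closure U)}. Then there exists a continuous injective map h from the product space (Fin d)^ℕ (with the product topology) to ℂ whose range is exactly X and which satisfies f(h(σ)) = h(σ ∘ succ) for every σ : ℕ → Fin d; in particular h is a homeomorphism from (Fin d)^ℕ onto X conjugating the full one-sided shift on d symbols to f restricted to X. -/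

import Mathlib

open Filter Topology Metric Set Function

set_option maxHeartbeats 1000000
set_option synthInstance.maxHeartbeats 400000

namespace Stmt10Aux

variable {d : ℕ}

/-- Composition of inverse branches along the word `σ`, innermost letter last:
`itW g σ n = g (σ 0) ∘ g (σ 1) ∘ ... ∘ g (σ (n-1))`. -/
def itW (g : Fin d → ℂ → ℂ) (σ : ℕ → Fin d) : ℕ → ℂ → ℂ
  | 0 => id
  | n+1 => itW g σ n ∘ g (σ n)

lemma itW_add (g : Fin d → ℂ → ℂ) (σ : ℕ → Fin d) (m k : ℕ) :
    itW g σ (m + k) = itW g σ m ∘ itW g (fun j => σ (m + j)) k := by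
  induction k with
  | zero => rfl
  | succ k ih =>
    show itW g σ ((m + k) + 1) = _
    rw [itW, ih]
    rfl

lemma itW_succ_left (g : Fin d → ℂ → ℂ) (σ : ℕ → Fin d) (n : ℕ) :
    itW g σ (n + 1) = g (σ 0) ∘ itW g (fun j => σ (j + 1)) n := by
  have h := itW_add g σ 1 n
  rw [add_comm 1 n] at h
  rw [h]
  have : (fun j => σ (1 + j)) = fun j => σ (j + 1) := by
    funext j; rw [add_comm]
  rw [this]
  rfl

lemma itW_congr {g : Fin d → ℂ → ℂ} {σ τ : ℕ → Fin d} {n : ℕ}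
    (h : ∀ k < n, σ k = τ k) : itW g σ n = itW g τ n := by
  induction n with
  | zero => rfl
  | succ n ih =>
    rw [itW, itW, ih fun k hk => h k (hk.trans (Nat.lt_succ_self n)),
      h n (Nat.lt_succ_self n)]

/-- Uniform Lipschitz bound, via the Schwarz lemma, for holomorphic functions on an open
set `Ω` mapping into a bounded set `Uu`, on a compact subset `Kc` of `Ω`. -/
lemma lipschitz_of_schwarz {Ω Kc Uu : Set ℂ} (hΩ : IsOpen Ω) (hKc : IsCompact Kc)
    (hKΩ : Kc ⊆ Ω) (hUb : Bornology.IsBounded Uu) :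
    ∃ C : ℝ, 0 < C ∧ ∀ F : ℂ → ℂ, DifferentiableOn ℂ F Ω → MapsTo F Ω Uu →
      ∀ x ∈ Kc, ∀ y ∈ Kc, dist (F x) (F y) ≤ C * dist x y := by
  obtain ⟨ρ, hρ, hρΩ⟩ := hKc.exists_thickening_subset_open hΩ hKΩ
  set R : ℝ := diam Uu + 1 with hR
  have hR0 : 0 < R := by positivity
  refine ⟨R / ρ, by positivity, fun F hFd hFU x hx y hy => ?_⟩
  have hball : ball x ρ ⊆ Ω := by
    refine subset_trans (fun z hz => ?_) hρΩ
    exact mem_thickening_iff.2 ⟨x, hx, hz⟩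
  by_cases hxy : dist y x < ρ
  · -- Schwarz lemma on the ball `ball x ρ`
    have hmaps : MapsTo F (ball x ρ) (ball (F x) R) := by
      intro z hz
      have hz' : F z ∈ Uu := hFU (hball hz)
      have hx' : F x ∈ Uu := hFU (hKΩ hx)
      have : dist (F z) (F x) ≤ diam Uu := dist_le_diam_of_mem hUb hz' hx'
      exact mem_ball.2 (lt_of_le_of_lt this (by simp [hR]))
    have := Complex.dist_le_div_mul_dist_of_mapsTo_ball (hFd.mono hball) (hmaps.mono_right ball_subset_closedBall)
      (mem_ball.2 hxy)
    rw [dist_comm x y, dist_comm (F x) (F y)]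
    exact this
  · -- crude bound
    push_neg at hxy
    have h1 : dist (F x) (F y) ≤ diam Uu :=
      dist_le_diam_of_mem hUb (hFU (hKΩ hx)) (hFU (hKΩ hy))
    have h2 : diam Uu ≤ R / ρ * dist x y := by
      rw [div_mul_eq_mul_div, le_div_iff₀ hρ]
      have hd0 : (0:ℝ) ≤ diam Uu := diam_nonneg
      have : diam Uu * ρ ≤ R * dist x y := by
        apply mul_le_mul (by simp [hR]) ?_ hρ.le hR0.le
        rwa [dist_comm] at hxy
      linarith
    exact h1.trans h2


/-- Sequential Arzelà–Ascoli extraction for an equicontinuous, self-mapping family on a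
compact set. -/
lemma extract {A : Set ℂ} (hA : IsCompact A) (F : ℕ → ℂ → ℂ)
    (hmaps : ∀ n, MapsTo (F n) A A)
    (hcont : ∀ n, ContinuousOn (F n) A)
    (hequi : ∀ ε > 0, ∃ δ > 0, ∀ n, ∀ x ∈ A, ∀ y ∈ A,
      dist x y < δ → dist (F n x) (F n y) ≤ ε) :
    ∃ (φ : ℕ → ℕ) (G : ℂ → ℂ), StrictMono φ ∧ ContinuousOn G A ∧ MapsTo G A A ∧
      TendstoUniformlyOn (fun k => F (φ k)) G atTop A := by
  classical
  haveI : CompactSpace A := isCompact_iff_compactSpace.mp hA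
  -- bundle as bounded continuous functions on the subtype
  have hcont' : ∀ n, Continuous (fun x : A => F n x) := fun n =>
    continuousOn_iff_continuous_restrict.mp (hcont n)
  let Fb : ℕ → BoundedContinuousFunction A ℂ := fun n =>
    BoundedContinuousFunction.mkOfCompact ⟨fun x : A => F n x, hcont' n⟩
  have hFb : ∀ n (x : A), Fb n x = F n x := fun n x => rfl
  -- the family is equicontinuous
  have hequi' : Equicontinuous fun i : Set.range Fb => (i : A → ℂ) := by
    intro x
    rw [Metric.equicontinuousAt_iff]
    intro ε hε
    obtain ⟨δ, hδ, hδ'⟩ := hequi (ε / 2) (half_pos hε)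
    refine ⟨δ, hδ, fun y hy i => ?_⟩
    obtain ⟨n, hn⟩ := i.2
    have : dist ((i : A → ℂ) x) ((i : A → ℂ) y) ≤ ε / 2 := by
      rw [← hn]
      refine hδ' n x x.2 y y.2 ?_
      rw [← Subtype.dist_eq, dist_comm]
      exact hy
    calc dist ((i : A → ℂ) x) ((i : A → ℂ) y) ≤ ε / 2 := this
      _ < ε := half_lt_self hε
  have hcpt : IsCompact (closure (Set.range Fb)) := by
    refine BoundedContinuousFunction.arzela_ascoli A hA (Set.range Fb) ?_ ?_
    · rintro f x ⟨n, rfl⟩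
      exact hmaps n x.2
    · exact hequi'
  obtain ⟨G0, hG0mem, φ, hφ, hGconv⟩ :=
    hcpt.isSeqCompact (fun n => subset_closure (Set.mem_range_self n))
  have hUnif : TendstoUniformly (fun k => (Fb (φ k) : A → ℂ)) (G0 : A → ℂ) atTop :=
    BoundedContinuousFunction.tendsto_iff_tendstoUniformly.mp hGconv
  refine ⟨φ, fun z => if hz : z ∈ A then G0 ⟨z, hz⟩ else 0, hφ, ?_, ?_, ?_⟩
  · rw [continuousOn_iff_continuous_restrict]
    convert G0.continuous using 1
    funext x
    simp [x.2]
  · intro z hz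
    simp only [hz, dif_pos]
    have hpt : Tendsto (fun k => Fb (φ k) ⟨z, hz⟩) atTop (𝓝 (G0 ⟨z, hz⟩)) :=
      hUnif.tendsto_at ⟨z, hz⟩
    exact hA.isClosed.mem_of_tendsto hpt
      (Eventually.of_forall fun k => hmaps (φ k) hz)
  · rw [Metric.tendstoUniformlyOn_iff]
    intro ε hε
    rw [Metric.tendstoUniformly_iff] at hUnif
    filter_upwards [hUnif ε hε] with k hk z hz
    simpa [hz, hFb] using hk ⟨z, hz⟩

/-- Uniform convergence of compositions. -/
lemma comp_unif {A : Set ℂ} (hA : IsCompact A) {P S : ℂ → ℂ} {Pk Sk : ℕ → ℂ → ℂ}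
    (hP : TendstoUniformlyOn Pk P atTop A) (hS : TendstoUniformlyOn Sk S atTop A)
    (hSk : ∀ k, MapsTo (Sk k) A A) (hSA : MapsTo S A A) (hPc : ContinuousOn P A) :
    TendstoUniformlyOn (fun k => Pk k ∘ Sk k) (P ∘ S) atTop A := by
  rw [Metric.tendstoUniformlyOn_iff] at hP hS ⊢
  intro ε hε
  obtain ⟨δ, hδ, hδ'⟩ := Metric.uniformContinuousOn_iff.mp
    (hA.uniformContinuousOn_of_continuous hPc) (ε / 2) (half_pos hε)
  filter_upwards [hP (ε / 2) (half_pos hε), hS δ hδ] with k hk1 hk2 x hx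
  have h1 : dist (P (S x)) (P (Sk k x)) < ε / 2 := by
    rcases eq_or_ne (S x) (Sk k x) with h | h
    · rw [h]; simpa using half_pos hε
    · exact hδ' (S x) (hSA hx) (Sk k x) (hSk k hx) (hk2 x hx)
  have h2 : dist (P (Sk k x)) (Pk k (Sk k x)) < ε / 2 := hk1 (Sk k x) (hSk k hx)
  calc dist ((P ∘ S) x) ((Pk k ∘ Sk k) x)
      ≤ dist (P (S x)) (P (Sk k x)) + dist (P (Sk k x)) (Pk k (Sk k x)) :=
        dist_triangle _ _ _
    _ < ε / 2 + ε / 2 := add_lt_add h1 h2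
    _ = ε := add_halves ε

/-- A point lying in every image `Fk k '' A` also lies in the image of the uniform limit. -/
lemma mem_image_of_limit {A : Set ℂ} (hA : IsCompact A) {Fk : ℕ → ℂ → ℂ} {F : ℂ → ℂ}
    (hconv : TendstoUniformlyOn Fk F atTop A) (hFc : ContinuousOn F A) {x : ℂ}
    (hx : ∀ k, x ∈ Fk k '' A) : x ∈ F '' A := by
  choose z hz hzx using hx
  obtain ⟨a, haA, φ, hφ, hlim⟩ := hA.tendsto_subseq hz
  refine ⟨a, haA, ?_⟩
  have h1 : Tendsto (fun k => F (z (φ k))) atTop (𝓝 (F a)) := by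
    refine (hFc a haA).tendsto.comp ?_
    exact tendsto_nhdsWithin_iff.mpr ⟨hlim, Eventually.of_forall fun k => hz _⟩
  have h2 : Tendsto (fun k => Fk (φ k) (z (φ k))) atTop (𝓝 (F a)) := by
    rw [Metric.tendsto_nhds]
    intro ε hε
    rw [Metric.tendstoUniformlyOn_iff] at hconv
    have hev1 := (hφ.tendsto_atTop.eventually (hconv (ε / 2) (half_pos hε)))
    rw [Metric.tendsto_nhds] at h1
    filter_upwards [hev1, h1 (ε / 2) (half_pos hε)] with k hk1 hk2
    calc dist (Fk (φ k) (z (φ k))) (F a)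
        ≤ dist (Fk (φ k) (z (φ k))) (F (z (φ k))) + dist (F (z (φ k))) (F a) :=
          dist_triangle _ _ _
      _ < ε / 2 + ε / 2 := by
          refine add_lt_add ?_ hk2
          rw [dist_comm]
          exact hk1 (z (φ k)) (hz _)
      _ = ε := add_halves ε
  have h3 : Tendsto (fun k => Fk (φ k) (z (φ k))) atTop (𝓝 x) := by
    simp only [hzx]
    exact tendsto_const_nhds
  exact tendsto_nhds_unique h2 h3

/-- From a nested sequence of compact sets each of diameter `≥ ε`, extract two points of the
intersection at distance `≥ ε`. -/
lemma exists_two_points {E : ℕ → Set ℂ} (hcomp : ∀ n, IsCompact (E n))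
    (hnest : ∀ n, E (n + 1) ⊆ E n) {ε : ℝ}
    (hne : ∀ n, ∃ x ∈ E n, ∃ y ∈ E n, ε ≤ dist x y) :
    ∃ x, (∀ n, x ∈ E n) ∧ ∃ y, (∀ n, y ∈ E n) ∧ ε ≤ dist x y := by
  have hanti : ∀ {m n : ℕ}, m ≤ n → E n ⊆ E m := by
    intro m n hmn
    induction hmn with
    | refl => exact subset_rfl
    | step h ih => exact (hnest _).trans ih
  choose x hx y hy hd using hne
  obtain ⟨a, _, φ, hφ, hlima⟩ := (hcomp 0).tendsto_subseq
    (fun n => hanti (Nat.zero_le n) (hx n))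
  obtain ⟨b, _, ψ, hψ, hlimb⟩ := (hcomp 0).tendsto_subseq
    (fun k => hanti (Nat.zero_le (φ k)) (hy (φ k)))
  have hlima' : Tendsto (fun j => x (φ (ψ j))) atTop (𝓝 a) :=
    hlima.comp hψ.tendsto_atTop
  have hmem : ∀ (c : ℂ) (u : ℕ → ℂ), (∀ j, u j ∈ E (φ (ψ j))) →
      Tendsto u atTop (𝓝 c) → ∀ m, c ∈ E m := by
    intro c u hu hc m
    refine (hcomp m).isClosed.mem_of_tendsto hc ?_
    have : ∀ᶠ j in atTop, m ≤ φ (ψ j) :=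
      (hφ.comp hψ).tendsto_atTop.eventually_ge_atTop m
    filter_upwards [this] with j hj
    exact hanti hj (hu j)
  refine ⟨a, hmem a _ (fun j => hx _) hlima', b, hmem b _ (fun j => hy _) hlimb, ?_⟩
  have : Tendsto (fun j => dist (x (φ (ψ j))) (y (φ (ψ j)))) atTop (𝓝 (dist a b)) :=
    hlima'.dist hlimb
  exact ge_of_tendsto this (Eventually.of_forall fun j => hd _)


/-- Iterates of a holomorphic self-map of `Uu` sending `closure Uu` into a compact
subset `Kc` of `Uu` have images of arbitrarily small diameter. -/
lemma single_shrink {Uu Kc : Set ℂ} (hUo : IsOpen Uu) (hUb : Bornology.IsBounded Uu)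
    (hUne : Uu.Nonempty) (hUconn : IsPreconnected Uu)
    (hKc : IsCompact Kc) (hKU : Kc ⊆ Uu) {T : ℂ → ℂ}
    (hTc : ContinuousOn T (closure Uu)) (hTd : DifferentiableOn ℂ T Uu)
    (hTK : MapsTo T (closure Uu) Kc) :
    ∀ ε > 0, ∃ n : ℕ, ∀ x ∈ T^[n] '' closure Uu, ∀ y ∈ T^[n] '' closure Uu,
      dist x y ≤ ε := by
  by_contra hcon
  push_neg at hcon
  obtain ⟨ε, hε, hcon⟩ := hcon
  set A := closure Uu with hAdef
  have hAc : IsCompact A := Metric.isCompact_of_isClosed_isBounded isClosed_closure hUb.closure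
  have hUA : Uu ⊆ A := subset_closure
  have hKA : Kc ⊆ A := hKU.trans hUA
  have hTA : MapsTo T A A := fun x hx => hUA (hKU (hTK hx))
  have hTnA : ∀ n, MapsTo (T^[n]) A A := fun n => hTA.iterate n
  have hTUu : MapsTo T Uu Uu := fun x hx => hKU (hTK (hUA hx))
  have hTnUu : ∀ n, MapsTo (T^[n]) Uu Uu := fun n => hTUu.iterate n
  have hTnd : ∀ n, DifferentiableOn ℂ (T^[n]) Uu := by
    intro n
    induction n with
    | zero => exact differentiableOn_id
    | succ n ih =>
      rw [Function.iterate_succ]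
      exact DifferentiableOn.comp ih hTd hTUu
  have hTnc : ∀ n, ContinuousOn (T^[n]) A := by
    intro n
    induction n with
    | zero => exact continuousOn_id
    | succ n ih =>
      rw [Function.iterate_succ]
      exact ContinuousOn.comp ih hTc hTA
  set E : ℕ → Set ℂ := fun n => T^[n] '' A with hEdef
  have hEc : ∀ n, IsCompact (E n) := fun n => hAc.image_of_continuousOn (hTnc n)
  have hEnest : ∀ n, E (n + 1) ⊆ E n := by
    rintro n z ⟨a, ha, rfl⟩
    rw [Function.iterate_succ_apply]
    exact ⟨T a, hTA ha, rfl⟩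
  -- two distant points in the intersection
  obtain ⟨x, hxE, y, hyE, hdxy⟩ := exists_two_points hEc hEnest
    (fun n => by
      obtain ⟨x, hx, y, hy, hd⟩ := hcon n
      exact ⟨x, hx, y, hy, hd.le⟩)
  -- uniform Lipschitz bound on Kc for all iterates
  obtain ⟨C, hC0, hC⟩ := lipschitz_of_schwarz hUo hKc hKU hUb
  have hLip : ∀ n, ∀ a ∈ Kc, ∀ b ∈ Kc, dist (T^[n] a) (T^[n] b) ≤ C * dist a b :=
    fun n => hC (T^[n]) (hTnd n) (hTnUu n)
  -- equicontinuity of the iterates T^[n+1]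
  have hTuc := Metric.uniformContinuousOn_iff.mp
    (hAc.uniformContinuousOn_of_continuous hTc)
  have hequi : ∀ ε' > (0:ℝ), ∃ δ > (0:ℝ), ∀ n, ∀ a ∈ A, ∀ b ∈ A,
      dist a b < δ → dist (T^[n+1] a) (T^[n+1] b) ≤ ε' := by
    intro ε' hε'
    obtain ⟨δ, hδ, hδ'⟩ := hTuc (ε' / C) (div_pos hε' hC0)
    refine ⟨δ, hδ, fun n a ha b hb hab => ?_⟩
    rw [Function.iterate_succ_apply, Function.iterate_succ_apply]
    calc dist (T^[n] (T a)) (T^[n] (T b)) ≤ C * dist (T a) (T b) :=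
          hLip n _ (hTK ha) _ (hTK hb)
      _ ≤ C * (ε' / C) := by
          have := (hδ' a ha b hb hab).le
          exact mul_le_mul_of_nonneg_left this hC0.le
      _ = ε' := by field_simp
  have hmapsiter : ∀ n : ℕ, MapsTo (T^[n+1]) A A := fun n => hTnA (n+1)
  have hcontiter : ∀ n : ℕ, ContinuousOn (T^[n+1]) A := fun n => hTnc (n+1)
  -- first extraction
  obtain ⟨φ, h, hφ, hhc, hhA, hhconv⟩ := extract hAc (fun n => T^[n+1])
    hmapsiter hcontiter hequi
  -- x and y are in the image of h
  have hximg : x ∈ h '' A :=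
    mem_image_of_limit hAc hhconv hhc (fun k => hxE (φ k + 1))
  have hyimg : y ∈ h '' A :=
    mem_image_of_limit hAc hhconv hhc (fun k => hyE (φ k + 1))
  -- blocks
  set m : ℕ → ℕ := fun k => φ (k + 1) - φ k with hmdef
  have hm1 : ∀ k, 1 ≤ m k := fun k => by
    have := hφ (lt_add_one k)
    simp only [hmdef]
    omega
  have hmadd : ∀ k, m k + (φ k + 1) = φ (k + 1) + 1 := fun k => by
    have := hφ (lt_add_one k)
    simp only [hmdef]
    omega
  have hequi' : ∀ ε' > (0:ℝ), ∃ δ > (0:ℝ), ∀ k, ∀ a ∈ A, ∀ b ∈ A,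
      dist a b < δ → dist (T^[m k] a) (T^[m k] b) ≤ ε' := by
    intro ε' hε'
    obtain ⟨δ, hδ, hδ'⟩ := hequi ε' hε'
    refine ⟨δ, hδ, fun k a ha b hb hab => ?_⟩
    have hmk : m k = (m k - 1) + 1 := by have := hm1 k; omega
    rw [hmk]
    exact hδ' (m k - 1) a ha b hb hab
  obtain ⟨ψ, h2, hψ, hh2c, hh2A, hh2conv⟩ := extract hAc (fun k => T^[m k])
    (fun k => hTnA (m k)) (fun k => hTnc (m k)) hequi'
  -- the functional equation h = h2 ∘ h
  have hkey : ∀ k, T^[φ (k+1) + 1] = T^[m k] ∘ T^[φ k + 1] := fun k => by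
    rw [← Function.iterate_add, hmadd]
  have hLHS : TendstoUniformlyOn (fun j => T^[φ (ψ j + 1) + 1]) h atTop A := by
    rw [Metric.tendstoUniformlyOn_iff] at hhconv ⊢
    intro ε' hε'
    have htend : Tendsto (fun j => ψ j + 1) atTop atTop :=
      (tendsto_add_atTop_nat 1).comp hψ.tendsto_atTop
    exact htend.eventually (hhconv ε' hε')
  have hSsub : TendstoUniformlyOn (fun j => T^[φ (ψ j) + 1]) h atTop A := by
    rw [Metric.tendstoUniformlyOn_iff] at hhconv ⊢
    intro ε' hε'
    exact hψ.tendsto_atTop.eventually (hhconv ε' hε')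
  have hRHS : TendstoUniformlyOn (fun j => T^[m (ψ j)] ∘ T^[φ (ψ j) + 1]) (h2 ∘ h)
      atTop A :=
    comp_unif hAc hh2conv hSsub (fun j => hTnA _) hhA hh2c
  have heqcomp : EqOn h (h2 ∘ h) A := by
    intro z hz
    have h1 := hLHS.tendsto_at hz
    have h2' := hRHS.tendsto_at hz
    have : (fun j => T^[φ (ψ j + 1) + 1] z) = fun j => (T^[m (ψ j)] ∘ T^[φ (ψ j) + 1]) z := by
      funext j
      rw [hkey (ψ j)]
    rw [this] at h1
    exact tendsto_nhds_unique h1 h2'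
  -- h and h2 land in Kc
  have hhK : ∀ z ∈ A, h z ∈ Kc := by
    intro z hz
    refine hKc.isClosed.mem_of_tendsto (hhconv.tendsto_at hz)
      (Eventually.of_forall fun k => ?_)
    rw [Function.iterate_succ_apply']
    exact hTK (hTnA (φ k) hz)
  have hh2K : ∀ z ∈ A, h2 z ∈ Kc := by
    intro z hz
    refine hKc.isClosed.mem_of_tendsto (hh2conv.tendsto_at hz)
      (Eventually.of_forall fun k => ?_)
    have hmk : m (ψ k) = (m (ψ k) - 1) + 1 := by have := hm1 (ψ k); omega
    rw [hmk, Function.iterate_succ_apply']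
    exact hTK (hTnA (m (ψ k) - 1) hz)
  -- the image S of Uu under h
  set S : Set ℂ := h '' Uu with hSdef
  have hsubS : h '' A ⊆ closure S := hhc.image_closure
  have hxy_ne : x ≠ y := by
    intro hxx
    rw [hxx] at hdxy
    simp at hdxy
    linarith
  obtain ⟨s₁, hs₁S, s₂, hs₂S, hs₁₂⟩ : ∃ s₁ ∈ S, ∃ s₂ ∈ S, s₁ ≠ s₂ := by
    by_contra hss
    push_neg at hss
    have hsub : S.Subsingleton := fun a ha b hb => by
      by_contra hab
      exact hab (hss a ha b hb)
    exact hxy_ne (hsub.closure (hsubS hximg) (hsubS hyimg))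
  have hSpre : IsPreconnected S := hUconn.image h (hhc.mono hUA)
  have hfixS : ∀ s ∈ S, h2 s = s := by
    rintro s ⟨z, hz, rfl⟩
    exact (heqcomp (hUA hz)).symm
  have hs₁Uu : s₁ ∈ Uu := by
    obtain ⟨z, hz, rfl⟩ := hs₁S
    exact hKU (hhK z (hUA hz))
  -- s₁ is an accumulation point of S
  have hacc : s₁ ∈ closure (S \ {s₁}) := by
    by_contra hcl
    have hO : IsOpen (closure (S \ {s₁}))ᶜ := isOpen_compl_iff.mpr isClosed_closure
    have hcover : S ⊆ (closure (S \ {s₁}))ᶜ ∪ {s₁}ᶜ := by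
      intro z hz
      by_cases hzz : z = s₁
      · left; rw [hzz]; exact hcl
      · right; exact hzz
    obtain ⟨z, hzS, hzO, hzne⟩ := hSpre _ _ hO isOpen_compl_singleton hcover
      ⟨s₁, hs₁S, hcl⟩ ⟨s₂, hs₂S, fun hc => hs₁₂ (hc.symm ▸ rfl)⟩
    exact hzO (subset_closure ⟨hzS, hzne⟩)
  have hfreq : ∃ᶠ z in 𝓝[≠] s₁, h2 z = z := by
    have := mem_closure_iff_frequently.mp hacc
    rw [frequently_nhdsWithin_iff]
    refine this.mono ?_
    rintro z ⟨hzS, hzne⟩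
    exact ⟨hfixS z hzS, hzne⟩
  -- identity theorem
  have hh2d : DifferentiableOn ℂ h2 Uu := by
    refine TendstoLocallyUniformlyOn.differentiableOn
      ((hh2conv.tendstoLocallyUniformlyOn).mono hUA)
      (Eventually.of_forall fun j => (hTnd (m (ψ j))).mono ?_) hUo
    exact subset_rfl
  have hh2a : AnalyticOnNhd ℂ h2 Uu := hh2d.analyticOnNhd hUo
  have hida : AnalyticOnNhd ℂ (id : ℂ → ℂ) Uu :=
    (differentiable_id.differentiableOn).analyticOnNhd hUo
  have heqid : EqOn h2 id Uu :=
    hh2a.eqOn_of_preconnected_of_frequently_eq hida hUconn hs₁Uu hfreq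
  -- contradiction: Uu ⊆ Kc forces Uu to be clopen
  have hUK : Uu ⊆ Kc := by
    intro z hz
    have : h2 z = z := heqid hz
    rw [← this]
    exact hh2K z (hUA hz)
  have hclosed : IsClosed Uu := by
    refine isClosed_of_closure_subset ?_
    exact (closure_minimal hUK hKc.isClosed).trans hKU
  have : Uu = ∅ ∨ Uu = univ := isClopen_iff.mp ⟨hclosed, hUo⟩
  rcases this with h' | h'
  · exact hUne.ne_empty h'
  · rw [h'] at hUb
    obtain ⟨r, hr⟩ := hUb.subset_closedBall (0 : ℂ)
    have h0 : (0:ℂ) ∈ closedBall (0:ℂ) r := hr (mem_univ _)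
    have hr0 : 0 ≤ r := by simpa using h0
    have hp : ((r + 1 : ℝ) : ℂ) ∈ closedBall (0:ℂ) r := hr (mem_univ _)
    rw [mem_closedBall, dist_zero_right] at hp
    rw [Complex.norm_real, Real.norm_eq_abs, abs_of_nonneg (by linarith)] at hp
    linarith

/-- Main shrinking lemma: images of `closure Uu` under length-`N` compositions of the
inverse branches have uniformly small diameter as `N → ∞`. -/
lemma word_shrink {d : ℕ} (g : Fin d → ℂ → ℂ) {Uu V : Set ℂ}
    (hUo : IsOpen Uu) (hUb : Bornology.IsBounded Uu) (hUne : Uu.Nonempty)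
    (hUconn : IsPreconnected Uu) (hVo : IsOpen V) (hVb : Bornology.IsBounded V)
    (hAV : closure Uu ⊆ V) (hgd : ∀ i, DifferentiableOn ℂ (g i) V)
    (hgV : ∀ i, MapsTo (g i) V Uu) :
    ∀ ε > 0, ∃ N : ℕ, ∀ σ : ℕ → Fin d, ∀ x ∈ itW g σ N '' closure Uu,
      ∀ y ∈ itW g σ N '' closure Uu, dist x y ≤ ε := by
  by_contra hcon
  push_neg at hcon
  obtain ⟨ε, hε, hcon⟩ := hcon
  set A := closure Uu with hAdef
  have hAc : IsCompact A := Metric.isCompact_of_isClosed_isBounded isClosed_closure hUb.closure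
  have hUA : Uu ⊆ A := subset_closure
  have hUV : Uu ⊆ V := hUA.trans hAV
  set Kc : Set ℂ := ⋃ i, g i '' A with hKdef
  have hKcomp : IsCompact Kc :=
    isCompact_iUnion fun i => hAc.image_of_continuousOn ((hgd i).continuousOn.mono hAV)
  have hKU : Kc ⊆ Uu := iUnion_subset fun i =>
    image_subset_iff.mpr fun x hx => hgV i (hAV hx)
  have hKA : Kc ⊆ A := hKU.trans hUA
  -- basic properties of the word compositions
  have hWd : ∀ (σ : ℕ → Fin d) n, DifferentiableOn ℂ (itW g σ n) V := by
    intro σ n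
    induction n with
    | zero => exact differentiableOn_id
    | succ n ih =>
      show DifferentiableOn ℂ (itW g σ n ∘ g (σ n)) V
      exact DifferentiableOn.comp ih (hgd (σ n)) fun x hx => hUV (hgV (σ n) hx)
  have hWV : ∀ (σ : ℕ → Fin d) n, MapsTo (itW g σ n) V V := by
    intro σ n
    induction n with
    | zero => exact mapsTo_id V
    | succ n ih =>
      intro x hx
      exact ih (hUV (hgV (σ n) hx))
  have hWA : ∀ (σ : ℕ → Fin d) n, MapsTo (itW g σ n) A A := by
    intro σ n
    induction n with
    | zero => exact mapsTo_id A
    | succ n ih =>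
      intro x hx
      exact ih (hUA (hgV (σ n) (hAV hx)))
  have hWc : ∀ (σ : ℕ → Fin d) n, ContinuousOn (itW g σ n) A :=
    fun σ n => ((hWd σ n).continuousOn).mono hAV
  have hWK : ∀ (σ : ℕ → Fin d) n, itW g σ (n + 1) '' A ⊆ Kc := by
    intro σ n
    rw [itW_succ_left, image_comp]
    refine subset_trans (image_mono ?_) (subset_iUnion (fun i => g i '' A) (σ 0))
    exact (hWA _ n).image_subset
  -- uniform Lipschitz bound and equicontinuity
  obtain ⟨C, hC0, hC⟩ := lipschitz_of_schwarz hVo hAc hAV hVb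
  have hWlip : ∀ (σ : ℕ → Fin d) n, ∀ a ∈ A, ∀ b ∈ A,
      dist (itW g σ n a) (itW g σ n b) ≤ C * dist a b :=
    fun σ n => hC (itW g σ n) (hWd σ n) (hWV σ n)
  have hequiW : ∀ (w : ℕ → (ℕ → Fin d)) (l : ℕ → ℕ), ∀ ε' > (0:ℝ), ∃ δ > (0:ℝ),
      ∀ k, ∀ a ∈ A, ∀ b ∈ A, dist a b < δ →
        dist (itW g (w k) (l k) a) (itW g (w k) (l k) b) ≤ ε' := by
    intro w l ε' hε'
    refine ⟨ε' / C, div_pos hε' hC0, fun k a ha b hb hab => ?_⟩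
    calc dist (itW g (w k) (l k) a) (itW g (w k) (l k) b) ≤ C * dist a b :=
          hWlip _ _ a ha b hb
      _ ≤ C * (ε' / C) := mul_le_mul_of_nonneg_left hab.le hC0.le
      _ = ε' := by field_simp
  -- choose a single infinite word along which diameters stay `≥ ε`
  set Cs : ℕ → Set (ℕ → Fin d) := fun n =>
    {σ | ∃ x ∈ itW g σ n '' A, ∃ y ∈ itW g σ n '' A, ε ≤ dist x y} with hCsdef
  have hCne : ∀ n, (Cs n).Nonempty := by
    intro n
    obtain ⟨σ, x, hx, y, hy, hd⟩ := hcon n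
    exact ⟨σ, x, hx, y, hy, hd.le⟩
  have hCcl : ∀ n, IsClosed (Cs n) := by
    intro n
    rw [← isOpen_compl_iff]
    rw [isOpen_iff_mem_nhds]
    intro τ hτ
    have hNopen : IsOpen {σ : ℕ → Fin d | ∀ k < n, σ k = τ k} := by
      have : {σ : ℕ → Fin d | ∀ k < n, σ k = τ k} =
          ⋂ k : Fin n, (fun σ : ℕ → Fin d => σ (k : ℕ)) ⁻¹' {τ (k : ℕ)} := by
        ext σ
        simp only [mem_setOf_eq, mem_iInter, mem_preimage, mem_singleton_iff]
        constructor
        · intro h k; exact h k k.2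
        · intro h k hk; exact h ⟨k, hk⟩
      rw [this]
      exact isOpen_iInter_of_finite fun k =>
        (continuous_apply ((k : Fin n) : ℕ)).isOpen_preimage _ (isOpen_discrete _)
    refine Filter.mem_of_superset (hNopen.mem_nhds fun k _ => rfl) ?_
    intro σ hσ hσC
    apply hτ
    have : itW g σ n = itW g τ n := itW_congr hσ
    rw [hCsdef] at hσC ⊢
    simp only [mem_setOf_eq] at hσC ⊢
    rwa [this] at hσC
  have hCdec : ∀ n, Cs (n + 1) ⊆ Cs n := by
    intro n σ hσ
    obtain ⟨x, hx, y, hy, hd⟩ := hσ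
    have hsub : itW g σ (n + 1) '' A ⊆ itW g σ n '' A := by
      show (itW g σ n ∘ g (σ n)) '' A ⊆ _
      rw [image_comp]
      refine image_mono ?_
      exact fun z hz => by
        obtain ⟨a, ha, rfl⟩ := hz
        exact hUA (hgV (σ n) (hAV ha))
    exact ⟨x, hsub hx, y, hsub hy, hd⟩
  obtain ⟨σs, hσs⟩ := IsCompact.nonempty_iInter_of_sequence_nonempty_isCompact_isClosed
    Cs hCdec hCne ((hCcl 0).isCompact) hCcl
  rw [mem_iInter] at hσs
  -- nested compacts along σs with two far points
  set E : ℕ → Set ℂ := fun n => itW g σs n '' A with hEdef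
  have hEc : ∀ n, IsCompact (E n) := fun n => hAc.image_of_continuousOn (hWc σs n)
  have hEnest : ∀ n, E (n + 1) ⊆ E n := by
    intro n
    show (itW g σs n ∘ g (σs n)) '' A ⊆ itW g σs n '' A
    rw [image_comp]
    refine image_mono ?_
    exact fun z hz => by
      obtain ⟨a, ha, rfl⟩ := hz
      exact hUA (hgV (σs n) (hAV ha))
  obtain ⟨x, hxE, y, hyE, hdxy⟩ := exists_two_points hEc hEnest (fun n => hσs n)
  -- first extraction: the prefix maps
  obtain ⟨φ, F, hφ, hFc, hFA, hFconv⟩ := extract hAc (fun k => itW g σs k)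
    (fun k => hWA σs k) (fun k => hWc σs k) (hequiW (fun _ => σs) id)
  have hximg : x ∈ F '' A := mem_image_of_limit hAc hFconv hFc (fun k => hxE (φ k))
  have hyimg : y ∈ F '' A := mem_image_of_limit hAc hFconv hFc (fun k => hyE (φ k))
  -- blocks between consecutive chosen prefixes
  set b : ℕ → ℕ := fun k => φ (k + 1) - φ k with hbdef
  have hb1 : ∀ k, 1 ≤ b k := fun k => by
    have := hφ (lt_add_one k)
    simp only [hbdef]
    omega
  have hbadd : ∀ k, φ k + b k = φ (k + 1) := fun k => by
    have := hφ (lt_add_one k)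
    simp only [hbdef]
    omega
  set Bl : ℕ → ℂ → ℂ := fun k => itW g (fun j => σs (φ k + j)) (b k) with hBldef
  have hkey : ∀ k, itW g σs (φ (k + 1)) = itW g σs (φ k) ∘ Bl k := fun k => by
    rw [← hbadd k, itW_add]
  -- second extraction: the blocks
  obtain ⟨ψ, Tl, hψ, hTlc, hTlA, hTlconv⟩ := extract hAc Bl
    (fun k => hWA _ _) (fun k => hWc _ _) (hequiW _ _)
  -- limit relation F = F ∘ Tl on A
  have hLHS : TendstoUniformlyOn (fun j => itW g σs (φ (ψ j + 1))) F atTop A := by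
    rw [Metric.tendstoUniformlyOn_iff] at hFconv ⊢
    intro ε' hε'
    have htend : Tendsto (fun j => ψ j + 1) atTop atTop :=
      (tendsto_add_atTop_nat 1).comp hψ.tendsto_atTop
    exact htend.eventually (hFconv ε' hε')
  have hPsub : TendstoUniformlyOn (fun j => itW g σs (φ (ψ j))) F atTop A := by
    rw [Metric.tendstoUniformlyOn_iff] at hFconv ⊢
    intro ε' hε'
    exact hψ.tendsto_atTop.eventually (hFconv ε' hε')
  have hRHS : TendstoUniformlyOn (fun j => itW g σs (φ (ψ j)) ∘ Bl (ψ j)) (F ∘ Tl)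
      atTop A :=
    comp_unif hAc hPsub hTlconv (fun j => hWA _ _) hTlA hFc
  have heqcomp : EqOn F (F ∘ Tl) A := by
    intro z hz
    have h1 := hLHS.tendsto_at hz
    have h2 := hRHS.tendsto_at hz
    have heq : (fun j => itW g σs (φ (ψ j + 1)) z) =
        fun j => (itW g σs (φ (ψ j)) ∘ Bl (ψ j)) z := by
      funext j
      rw [hkey (ψ j)]
    rw [heq] at h1
    exact tendsto_nhds_unique h1 h2
  -- Tl maps A into Kc
  have hTlK : MapsTo Tl A Kc := by
    intro z hz
    refine hKcomp.isClosed.mem_of_tendsto (hTlconv.tendsto_at hz)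
      (Eventually.of_forall fun k => ?_)
    have hbk : b (ψ k) = (b (ψ k) - 1) + 1 := by have := hb1 (ψ k); omega
    have : Bl (ψ k) z ∈ itW g (fun j => σs (φ (ψ k) + j)) ((b (ψ k) - 1) + 1) '' A := by
      rw [← hbk]
      exact ⟨z, hz, rfl⟩
    exact hWK _ _ this
  -- Tl is holomorphic on Uu
  have hTld : DifferentiableOn ℂ Tl Uu := by
    refine TendstoLocallyUniformlyOn.differentiableOn
      ((hTlconv.tendstoLocallyUniformlyOn).mono hUA)
      (Eventually.of_forall fun j => (hWd _ _).mono hUV) hUo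
  -- apply the single-map shrinking lemma to Tl
  have hshr := single_shrink hUo hUb hUne hUconn hKcomp hKU (hTlc.mono (by rw [← hAdef]))
    hTld (by rw [← hAdef]; exact hTlK)
  -- uniform continuity of F
  obtain ⟨δ, hδ, hδ'⟩ := Metric.uniformContinuousOn_iff.mp
    (hAc.uniformContinuousOn_of_continuous hFc) (ε / 2) (by linarith)
  obtain ⟨n, hn⟩ := hshr (δ / 2) (by linarith)
  -- F ∘ Tl^[n] = F on A
  have hTlAA : MapsTo Tl A A := fun z hz => hKA (hTlK hz)
  have hiter : ∀ n', ∀ a ∈ A, F (Tl^[n'] a) = F a := by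
    intro n'
    induction n' with
    | zero => intro a _; rfl
    | succ n' ih =>
      intro a ha
      rw [Function.iterate_succ_apply]
      rw [ih (Tl a) (hTlAA ha)]
      exact (heqcomp ha).symm
  obtain ⟨a, haA, hax⟩ := hximg
  obtain ⟨c, hcA, hcy⟩ := hyimg
  have hd1 : dist (Tl^[n] a) (Tl^[n] c) ≤ δ / 2 :=
    hn _ ⟨a, by rwa [← hAdef], rfl⟩ _ ⟨c, by rwa [← hAdef], rfl⟩
  have hmem1 : Tl^[n] a ∈ A := hTlAA.iterate n haA
  have hmem2 : Tl^[n] c ∈ A := hTlAA.iterate n hcA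
  have hd2 : dist (F (Tl^[n] a)) (F (Tl^[n] c)) < ε / 2 :=
    hδ' _ hmem1 _ hmem2 (lt_of_le_of_lt hd1 (by linarith))
  rw [hiter n a haA, hiter n c hcA, hax, hcy] at hd2
  linarith

end Stmt10Aux

open Stmt10Aux in
/-- Itinerary coding: inverse branches g_i of f mapping cl U compactly into U
with pairwise disjoint images conjugate f on the maximal invariant set X to the
full one-sided shift on d symbols. -/
theorem stmt10 (d : ℕ) (hd : 1 ≤ d)
    (U : Set ℂ) (hUne : U.Nonempty) (hUb : Bornology.IsBounded U)
    (hUo : IsOpen U) (hUsc : SimplyConnectedSpace U)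
    (W : Set ℂ) (hWo : IsOpen W) (hUW : closure U ⊆ W)
    (g : Fin d → ℂ → ℂ)
    (hg : ∀ i, DifferentiableOn ℂ (g i) W)
    (hgU : ∀ i, g i '' closure U ⊆ U)
    (hdisj : ∀ i j : Fin d, i ≠ j → Disjoint (g i '' closure U) (g j '' closure U))
    (f : ℂ → ℂ) (hfg : ∀ i, ∀ z ∈ closure U, f (g i z) = z)
    (X : Set ℂ)
    (hX : X = {z : ℂ | ∀ n : ℕ, f^[n] z ∈ ⋃ i : Fin d, g i '' closure U}) :
    ∃ h : (ℕ → Fin d) → ℂ, Continuous h ∧ Function.Injective h ∧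
      Set.range h = X ∧ ∀ σ : ℕ → Fin d, f (h σ) = h (σ ∘ Nat.succ) := by
  classical
  have hAc : IsCompact (closure U) :=
    Metric.isCompact_of_isClosed_isBounded isClosed_closure hUb.closure
  have hUA : U ⊆ closure U := subset_closure
  haveI := hUsc
  have hUpath : IsPathConnected U := isPathConnected_iff_pathConnectedSpace.mpr inferInstance
  have hUconn : IsPreconnected U := hUpath.isConnected.isPreconnected
  obtain ⟨R, hR⟩ := hAc.isBounded.subset_ball (0 : ℂ)
  set V : Set ℂ := (⋂ i, (W ∩ g i ⁻¹' U)) ∩ Metric.ball (0 : ℂ) R with hVdef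
  have hVo : IsOpen V := by
    refine IsOpen.inter (isOpen_iInter_of_finite fun i => ?_) Metric.isOpen_ball
    exact (hg i).continuousOn.isOpen_inter_preimage hWo hUo
  have hVb : Bornology.IsBounded V :=
    Metric.isBounded_ball.subset inter_subset_right
  have hAV : closure U ⊆ V := by
    refine subset_inter (subset_iInter fun i => subset_inter hUW ?_) hR
    intro x hx
    exact hgU i (Set.mem_image_of_mem _ hx)
  have hgd : ∀ i, DifferentiableOn ℂ (g i) V :=
    fun i => (hg i).mono fun x hx => (mem_iInter.mp hx.1 i).1
  have hgV : ∀ i, Set.MapsTo (g i) V U := fun i x hx => (mem_iInter.mp hx.1 i).2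
  have shrink := word_shrink g hUo hUb hUne hUconn hVo hVb hAV hgd hgV
  -- basic facts about the word maps on `closure U`
  have hgA : ∀ i, Set.MapsTo (g i) (closure U) (closure U) :=
    fun i x hx => hUA (hgU i (Set.mem_image_of_mem _ hx))
  have hWA : ∀ (σ : ℕ → Fin d) n, Set.MapsTo (itW g σ n) (closure U) (closure U) := by
    intro σ n
    induction n with
    | zero => exact Set.mapsTo_id _
    | succ n ih => exact fun x hx => ih (hgA (σ n) hx)
  have hWc : ∀ (σ : ℕ → Fin d) n, ContinuousOn (itW g σ n) (closure U) := by
    intro σ n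
    induction n with
    | zero => exact continuousOn_id
    | succ n ih =>
      show ContinuousOn (itW g σ n ∘ g (σ n)) (closure U)
      exact ih.comp ((hg (σ n)).continuousOn.mono hUW) (hgA (σ n))
  have hEnest : ∀ (σ : ℕ → Fin d) n,
      itW g σ (n+1) '' closure U ⊆ itW g σ n '' closure U := by
    intro σ n
    show (itW g σ n ∘ g (σ n)) '' closure U ⊆ _
    rw [Set.image_comp]
    refine Set.image_mono ?_
    rintro z ⟨a, ha, rfl⟩
    exact hgA (σ n) ha
  have hEc : ∀ (σ : ℕ → Fin d) n, IsCompact (itW g σ n '' closure U) :=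
    fun σ n => hAc.image_of_continuousOn (hWc σ n)
  have hne : ∀ σ : ℕ → Fin d, (⋂ n, itW g σ n '' closure U).Nonempty := by
    intro σ
    exact IsCompact.nonempty_iInter_of_sequence_nonempty_isCompact_isClosed
      (fun n => itW g σ n '' closure U) (hEnest σ)
      (fun n => (hUne.closure).image _) (hEc σ 0) (fun n => (hEc σ n).isClosed)
  set h : (ℕ → Fin d) → ℂ := fun σ => (hne σ).some with hhdef
  have hmem : ∀ (σ : ℕ → Fin d) n, h σ ∈ itW g σ n '' closure U := by
    intro σ n
    have := (hne σ).some_mem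
    rw [mem_iInter] at this
    exact this n
  have huniq : ∀ (σ : ℕ → Fin d) z, (∀ n, z ∈ itW g σ n '' closure U) → z = h σ := by
    intro σ z hz
    rw [← dist_le_zero]
    refine le_of_forall_pos_le_add fun ε hε => ?_
    obtain ⟨N, hN⟩ := shrink ε hε
    have := hN σ z (hz N) (h σ) (hmem σ N)
    linarith
  -- conjugacy
  have hconj : ∀ σ : ℕ → Fin d, f (h σ) = h (fun j => σ (j + 1)) := by
    intro σ
    refine huniq _ _ fun n => ?_
    have hm := hmem σ (n+1)
    rw [itW_succ_left, Set.image_comp] at hm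
    obtain ⟨w, hw, hws⟩ := hm
    have hwA : w ∈ closure U := (hWA _ n).image_subset hw
    have hfw : f (h σ) = w := by rw [← hws, hfg (σ 0) w hwA]
    rw [hfw]
    exact hw
  have hiter : ∀ n (σ : ℕ → Fin d), f^[n] (h σ) = h (fun j => σ (j + n)) := by
    intro n
    induction n with
    | zero =>
      intro σ
      have : (fun j => σ (j + 0)) = σ := by funext j; rw [Nat.add_zero]
      rw [this, Function.iterate_zero_apply]
    | succ n ih =>
      intro σ
      rw [Function.iterate_succ_apply, hconj σ, ih]
  have h1img : ∀ σ : ℕ → Fin d, h σ ∈ g (σ 0) '' closure U := by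
    intro σ
    have h1 : itW g σ 1 = g (σ 0) := by funext z; rfl
    have := hmem σ 1
    rwa [h1] at this
  refine ⟨h, ?_, ?_, ?_, ?_⟩
  · -- continuity
    rw [continuous_iff_continuousAt]
    intro σ
    rw [ContinuousAt, Metric.tendsto_nhds]
    intro ε hε
    obtain ⟨N, hN⟩ := shrink (ε/2) (by linarith)
    have hNopen : IsOpen {τ : ℕ → Fin d | ∀ k < N, τ k = σ k} := by
      have : {τ : ℕ → Fin d | ∀ k < N, τ k = σ k} =
          ⋂ k : Fin N, (fun τ : ℕ → Fin d => τ (k : ℕ)) ⁻¹' {σ (k : ℕ)} := by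
        ext τ
        simp only [mem_setOf_eq, mem_iInter, mem_preimage, mem_singleton_iff]
        exact ⟨fun hh k => hh k k.2, fun hh k hk => hh ⟨k, hk⟩⟩
      rw [this]
      exact isOpen_iInter_of_finite fun k =>
        (continuous_apply ((k : Fin N) : ℕ)).isOpen_preimage _ (isOpen_discrete _)
    filter_upwards [hNopen.mem_nhds fun k _ => rfl] with τ hτ
    have hiteq : itW g τ N = itW g σ N := itW_congr hτ
    have hd' := hN σ (h τ) (by rw [← hiteq]; exact hmem τ N) (h σ) (hmem σ N)
    calc dist (h τ) (h σ) ≤ ε / 2 := hd'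
      _ < ε := by linarith
  · -- injectivity
    intro σ τ hEq
    by_contra hne'
    obtain ⟨n, hn⟩ : ∃ n, σ n ≠ τ n := by
      by_contra hc
      push_neg at hc
      exact hne' (funext hc)
    have e1 : h (fun j => σ (j + n)) = h (fun j => τ (j + n)) := by
      rw [← hiter n σ, ← hiter n τ, hEq]
    have m1 : h (fun j => σ (j + n)) ∈ g (σ n) '' closure U := by
      have := h1img (fun j => σ (j + n))
      simpa [Nat.zero_add] using this
    have m2 : h (fun j => τ (j + n)) ∈ g (τ n) '' closure U := by
      have := h1img (fun j => τ (j + n))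
      simpa [Nat.zero_add] using this
    rw [e1] at m1
    exact Set.disjoint_left.mp (hdisj (σ n) (τ n) hn) m1 m2
  · -- range = X
    ext z
    constructor
    · rintro ⟨σ, rfl⟩
      rw [hX]
      intro n
      rw [hiter n σ]
      refine mem_iUnion.mpr ⟨σ n, ?_⟩
      have := h1img (fun j => σ (j + n))
      simpa [Nat.zero_add] using this
    · intro hzX
      rw [hX] at hzX
      simp only [mem_setOf_eq] at hzX
      choose σ hσ using fun n => mem_iUnion.mp (hzX n)
      have hclaim : ∀ n (σ' : ℕ → Fin d) (z' : ℂ),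
          (∀ k, f^[k] z' ∈ g (σ' k) '' closure U) → z' ∈ itW g σ' n '' closure U := by
        intro n
        induction n with
        | zero =>
          intro σ' z' hz'
          have h0 := hz' 0
          rw [Function.iterate_zero_apply] at h0
          exact ⟨z', hUA (hgU (σ' 0) h0), rfl⟩
        | succ n ih =>
          intro σ' z' hz'
          have h0 := hz' 0
          rw [Function.iterate_zero_apply] at h0
          obtain ⟨u, hu, hgu⟩ := h0
          have hfz : f z' = u := by rw [← hgu, hfg (σ' 0) u hu]
          have hshift : ∀ k, f^[k] (f z') ∈ g (σ' (k + 1)) '' closure U := by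
            intro k
            rw [← Function.iterate_succ_apply]
            exact hz' (k + 1)
          obtain ⟨a, ha, hae⟩ := ih (fun k => σ' (k + 1)) (f z') hshift
          refine ⟨a, ha, ?_⟩
          rw [itW_succ_left]
          show g (σ' 0) (itW g (fun j => σ' (j + 1)) n a) = z'
          rw [hae, hfz, hgu]
      exact ⟨σ, (huniq σ z fun n => hclaim n σ z hσ).symm⟩
  · -- conjugacy
    intro σ
    rw [hconj σ]
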